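/- arXiv:2205.13599 — 2 statements merged into one kernel-verified Lean document; each statement's English description precedes it below -/
import Mathlib

section
/- (VectorAdam single step is rotation equivariant.) Let n ≥ 1, let f : ℝⁿ → ℝ be differentiable and rotation invariant, and fix hyperparameters α > 0, β₁, β₂ ∈ [0,1), ε > 0 and timestep t ≥ 1. Define one VectorAdam step on state (θ, m, v) ∈ ℝⁿ × ℝⁿ × ℝ by: g = ∇f(θ); m* = β₁m + (1−β₁)g; v* = β₂v + (1−β₂)‖g‖²₂; m̂ = m*/(1−β₁ᵗ); v̂ = v*/(1−β₂ᵗ); θ* = θ − α·m̂/(√v̂ + ε). If (θ', m', v') denotes the result of the same step applied to (Rθ, Rm, v) for a rotation R ∈ SO(n), then θ' = Rθ*, m' = Rm*, and v' = v*. -/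
/-- One VectorAdam step on the state `(θ, m, v)` at timestep `t`:
`g = ∇f(θ)`, `m* = β₁m + (1−β₁)g`, `v* = β₂v + (1−β₂)‖g‖²`,
`m̂ = m*/(1−β₁ᵗ)`, `v̂ = v*/(1−β₂ᵗ)`, `θ* = θ − α·m̂/(√v̂ + ε)`. -/
noncomputable def vectorAdamStep (n : ℕ) (f : EuclideanSpace ℝ (Fin n) → ℝ)
    (α β₁ β₂ ε : ℝ) (t : ℕ)
    (s : EuclideanSpace ℝ (Fin n) × EuclideanSpace ℝ (Fin n) × ℝ) :
    EuclideanSpace ℝ (Fin n) × EuclideanSpace ℝ (Fin n) × ℝ :=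
  let g := gradient f s.1
  let mStar := β₁ • s.2.1 + (1 - β₁) • g
  let vStar := β₂ * s.2.2 + (1 - β₂) * ‖g‖ ^ 2
  let mHat := (1 - β₁ ^ t)⁻¹ • mStar
  let vHat := vStar / (1 - β₂ ^ t)
  (s.1 - (α / (Real.sqrt vHat + ε)) • mHat, mStar, vStar)

lemma gradient_rot {n : ℕ} (f : EuclideanSpace ℝ (Fin n) → ℝ)
    (hf : Differentiable ℝ f)
    (R : EuclideanSpace ℝ (Fin n) ≃ₗᵢ[ℝ] EuclideanSpace ℝ (Fin n))
    (hfR : ∀ x, f (R x) = f x) (θ : EuclideanSpace ℝ (Fin n)) :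
    gradient f (R θ) = R (gradient f θ) := by
  have hcomp : f = f ∘ R := by
    funext x; simp [hfR x]
  have hfd : fderiv ℝ f θ =
      (fderiv ℝ f (R θ)).comp (R : EuclideanSpace ℝ (Fin n) →L[ℝ] _) := by
    conv_lhs => rw [hcomp]
    rw [fderiv_comp θ (hf (R θ)) R.differentiableAt]
    congr 1
    exact R.fderiv
  apply ext_inner_right ℝ
  intro y
  have key : ∀ u : EuclideanSpace ℝ (Fin n),
      (inner ℝ (gradient f θ) u : ℝ) = inner ℝ (gradient f (R θ)) (R u) := by
    intro u
    have h1 : (inner ℝ (gradient f θ) u : ℝ) = fderiv ℝ f θ u :=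
      ((hf θ).hasGradientAt.hasFDerivAt.unique (hf θ).hasFDerivAt) ▸
        (by simp [gradient, InnerProductSpace.toDual_symm_apply])
    have h2 : (inner ℝ (gradient f (R θ)) (R u) : ℝ) = fderiv ℝ f (R θ) (R u) := by
      simp [gradient, InnerProductSpace.toDual_symm_apply]
    rw [h1, h2, hfd]; rfl
  have h := (key (R.symm y)).symm
  rw [R.apply_symm_apply] at h
  rw [h, ← R.inner_map_map (gradient f θ) (R.symm y), R.apply_symm_apply]

/-- A single VectorAdam step is rotation equivariant: applying the step to
`(Rθ, Rm, v)` yields `(Rθ*, Rm*, v*)` where `(θ*, m*, v*)` is the result of the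
step on `(θ, m, v)`, for any rotation invariant differentiable objective `f`. -/
theorem vectorAdamStep_rotation_equivariant
    (n : ℕ) (hn : 1 ≤ n)
    (f : EuclideanSpace ℝ (Fin n) → ℝ) (hf : Differentiable ℝ f)
    (hinv : ∀ (R : EuclideanSpace ℝ (Fin n) ≃ₗᵢ[ℝ] EuclideanSpace ℝ (Fin n)),
      LinearMap.det R.toLinearEquiv.toLinearMap = 1 →
      ∀ x : EuclideanSpace ℝ (Fin n), f (R x) = f x)
    (α β₁ β₂ ε : ℝ) (hα : 0 < α)
    (hβ₁ : β₁ ∈ Set.Ico (0 : ℝ) 1) (hβ₂ : β₂ ∈ Set.Ico (0 : ℝ) 1) (hε : 0 < ε)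
    (t : ℕ) (ht : 1 ≤ t)
    (R : EuclideanSpace ℝ (Fin n) ≃ₗᵢ[ℝ] EuclideanSpace ℝ (Fin n))
    (hR : LinearMap.det R.toLinearEquiv.toLinearMap = 1)
    (θ m : EuclideanSpace ℝ (Fin n)) (v : ℝ) :
    vectorAdamStep n f α β₁ β₂ ε t (R θ, R m, v) =
      (R (vectorAdamStep n f α β₁ β₂ ε t (θ, m, v)).1,
       R (vectorAdamStep n f α β₁ β₂ ε t (θ, m, v)).2.1,
       (vectorAdamStep n f α β₁ β₂ ε t (θ, m, v)).2.2) := by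
  have hg : gradient f (R θ) = R (gradient f θ) :=
    gradient_rot f hf R (hinv R hR) θ
  simp only [vectorAdamStep, hg]
  refine Prod.ext ?_ (Prod.ext ?_ ?_) <;>
    simp [← map_smul, ← map_add, ← map_sub, R.norm_map]
end

section
/- (Effective step size bound for equal decay rates.) Let g₁, …, g_T ∈ ℝⁿ and let a₁, …, a_T ≥ 0 with a₁ + ⋯ + a_T ≤ 1. If m = Σₖ aₖ·gₖ and v = Σₖ aₖ·‖gₖ‖²₂, then ‖m‖₂ ≤ √v. Consequently, for any α > 0 and ε > 0, the VectorAdam-style update Δθ = −α·m/(√v + ε) satisfies ‖Δθ‖₂ ≤ α. -/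
/-- Effective step size bound: if `m = Σₖ aₖ·gₖ` and `v = Σₖ aₖ·‖gₖ‖²` with
nonnegative weights summing to at most 1, then `‖m‖ ≤ √v`, and consequently the
update `Δθ = −α·m/(√v + ε)` satisfies `‖Δθ‖ ≤ α`. -/
theorem effective_step_size_bound
    (n T : ℕ)
    (g : Fin T → EuclideanSpace ℝ (Fin n))
    (a : Fin T → ℝ) (ha : ∀ k, 0 ≤ a k) (hsum : ∑ k, a k ≤ 1)
    (m : EuclideanSpace ℝ (Fin n)) (hm : m = ∑ k, a k • g k)
    (v : ℝ) (hv : v = ∑ k, a k * ‖g k‖ ^ 2) :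
    ‖m‖ ≤ Real.sqrt v ∧
    ∀ α ε : ℝ, 0 < α → 0 < ε →
      ‖(-(α / (Real.sqrt v + ε))) • m‖ ≤ α := by
  have hv0 : 0 ≤ v := by
    rw [hv]
    exact Finset.sum_nonneg fun k _ => mul_nonneg (ha k) (sq_nonneg _)
  have hm1 : ‖m‖ ≤ ∑ k, a k * ‖g k‖ := by
    rw [hm]
    refine (norm_sum_le _ _).trans_eq ?_
    simp [norm_smul, abs_of_nonneg (ha _)]
  have hcs : (∑ k, a k * ‖g k‖) ^ 2 ≤ (∑ k, a k) * ∑ k, a k * ‖g k‖ ^ 2 :=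
    Finset.sum_sq_le_sum_mul_sum_of_sq_eq_mul Finset.univ
      (fun k _ => ha k) (fun k _ => mul_nonneg (ha k) (sq_nonneg _))
      (fun k _ => by ring)
  have hmv : ‖m‖ ^ 2 ≤ v := by
    calc ‖m‖ ^ 2 ≤ (∑ k, a k * ‖g k‖) ^ 2 := by
          apply pow_le_pow_left₀ (norm_nonneg _) hm1
      _ ≤ (∑ k, a k) * ∑ k, a k * ‖g k‖ ^ 2 := hcs
      _ ≤ 1 * ∑ k, a k * ‖g k‖ ^ 2 := by
          apply mul_le_mul_of_nonneg_right hsum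
          exact Finset.sum_nonneg fun k _ => mul_nonneg (ha k) (sq_nonneg _)
      _ = v := by rw [one_mul, hv]
  have hmsqrt : ‖m‖ ≤ Real.sqrt v := (Real.le_sqrt (norm_nonneg _) hv0).mpr hmv
  refine ⟨hmsqrt, fun α ε hα hε => ?_⟩
  have hden : 0 < Real.sqrt v + ε := by positivity
  rw [norm_smul]
  have : |(-(α / (Real.sqrt v + ε)))| = α / (Real.sqrt v + ε) := by
    rw [abs_neg, abs_of_nonneg (by positivity)]
  rw [Real.norm_eq_abs, this]
  calc α / (Real.sqrt v + ε) * ‖m‖ ≤ α / (Real.sqrt v + ε) * (Real.sqrt v + ε) := by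
        apply mul_le_mul_of_nonneg_left _ (by positivity)
        exact hmsqrt.trans (by linarith)
    _ = α := div_mul_cancel₀ α hden.ne'
end
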